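/- Let X be an integrable real random variable with continuous strictly increasing CDF F. For α ∈ (0,1], the quantity (1/α)∫₀^α F⁻¹(τ) dτ equals the infimum of E_q[X] over all probability measures q absolutely continuous with respect to the law P of X whose density dq/dP takes values in [0, 1/α]. -/

import Mathlib

open MeasureTheory

/-- Generalized inverse CDF (quantile function) of the random variable `X` under `μ`. -/
noncomputable def quantile {Ω : Type*} [MeasurableSpace Ω] (μ : Measure Ω)
    (X : Ω → ℝ) (τ : ℝ) : ℝ :=
  sInf {x : ℝ | τ ≤ (μ {ω | X ω ≤ x}).toReal}

theorem cvar_dual_representation {Ω : Type*} [MeasurableSpace Ω] (μ : Measure Ω)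
    [IsProbabilityMeasure μ] (X : Ω → ℝ) (hXm : Measurable X) (hX : Integrable X μ)
    (hcont : Continuous (fun x => (μ {ω | X ω ≤ x}).toReal))
    (hsm : StrictMono (fun x => (μ {ω | X ω ≤ x}).toReal))
    (α : ℝ) (hα : α ∈ Set.Ioc (0:ℝ) 1) :
    (1/α) * ∫ τ in Set.Ioc 0 α, quantile μ X τ =
      sInf {r : ℝ | ∃ g : Ω → ℝ, Measurable g ∧ (∀ ω, 0 ≤ g ω ∧ g ω ≤ 1/α) ∧
        (∫ ω, g ω ∂μ) = 1 ∧ r = ∫ ω, g ω * X ω ∂μ} := by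
  obtain ⟨hα0, hα1⟩ := hα
  have hXae : AEMeasurable X μ := hXm.aemeasurable
  set ν : Measure ℝ := μ.map X with hνdef
  have hνprob : IsProbabilityMeasure ν := Measure.isProbabilityMeasure_map hXae
  set F : ℝ → ℝ := fun x => (μ {ω | X ω ≤ x}).toReal with hFdef
  have hFx : ∀ x, (μ {ω | X ω ≤ x}).toReal = F x := fun _ => rfl
  have hFν : ∀ x, ν (Set.Iic x) = ENNReal.ofReal (F x) := by
    intro x
    rw [hνdef, Measure.map_apply hXm measurableSet_Iic]
    have : X ⁻¹' Set.Iic x = {ω | X ω ≤ x} := rfl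
    rw [this, hFdef]
    exact (ENNReal.ofReal_toReal (measure_ne_top μ _)).symm
  have hF01 : ∀ x, 0 ≤ F x := fun _ => ENNReal.toReal_nonneg
  have hFle : ∀ x, F x ≤ 1 := by
    intro x
    have h1 : (μ {ω | X ω ≤ x}) ≤ 1 := prob_le_one
    have := ENNReal.toReal_mono ENNReal.one_ne_top h1
    simpa using this
  have hFlt1 : ∀ x, F x < 1 := fun x => lt_of_lt_of_le (hsm (lt_add_one x)) (hFle _)
  have hF0lt : ∀ x, 0 < F x := fun x => lt_of_le_of_lt (hF01 (x-1)) (hsm (sub_one_lt x))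
  have hFνR : F = fun x => (ν (Set.Iic x)).toReal := by
    funext x
    rw [hFν x, ENNReal.toReal_ofReal (hF01 x)]
  have hFcdf : F = ProbabilityTheory.cdf ν := by
    rw [hFνR]; funext x; exact (ProbabilityTheory.cdf_eq_real ν x).symm
  have htop : Filter.Tendsto F Filter.atTop (nhds 1) := by
    rw [hFcdf]; exact ProbabilityTheory.tendsto_cdf_atTop ν
  have hbot : Filter.Tendsto F Filter.atBot (nhds 0) := by
    rw [hFcdf]; exact ProbabilityTheory.tendsto_cdf_atBot ν
  have hsurj : ∀ τ : ℝ, 0 < τ → τ < 1 → ∃ c, F c = τ := by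
    intro τ hτ0 hτ1
    obtain ⟨a, ha⟩ := (hbot.eventually_lt_const hτ0).exists
    obtain ⟨b, hb⟩ := (htop.eventually_const_lt hτ1).exists
    have hab : a ≤ b := (hsm.lt_iff_lt.mp (ha.trans hb)).le
    have := intermediate_value_Icc hab hcont.continuousOn
    obtain ⟨c, _, hc⟩ := this ⟨ha.le, hb.le⟩
    exact ⟨c, hc⟩
  have hquant : ∀ b : ℝ, quantile μ X (F b) = b := by
    intro b
    have hset : {x : ℝ | F b ≤ (μ {ω | X ω ≤ x}).toReal} = Set.Ici b := by
      ext x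
      simp only [Set.mem_setOf_eq, Set.mem_Ici, hFx]
      exact hsm.le_iff_le
    rw [quantile, hset, csInf_Ici]
  have hFm : Measurable F := hcont.measurable
  have hembF : MeasurableEmbedding F := hFm.measurableEmbedding hsm.injective
  -- pushforward of ν under F is uniform on (0,1)
  have hmapF : ν.map F = volume.restrict (Set.Ioo 0 1) := by
    refine Measure.ext_of_Iic _ _ (fun t => ?_)
    rw [Measure.map_apply hFm measurableSet_Iic, Measure.restrict_apply measurableSet_Iic]
    rcases le_or_gt t 0 with ht | ht
    · have h1 : F ⁻¹' Set.Iic t = ∅ := by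
        ext x
        simp only [Set.mem_preimage, Set.mem_Iic, Set.mem_empty_iff_false, iff_false, not_le]
        exact lt_of_le_of_lt ht (hF0lt x)
      have h2 : Set.Iic t ∩ Set.Ioo 0 1 = ∅ := by
        ext x
        simp only [Set.mem_inter_iff, Set.mem_Iic, Set.mem_Ioo, Set.mem_empty_iff_false,
          iff_false, not_and]
        intro h1x h2x
        linarith
      rw [h1, h2]
      simp
    rcases lt_or_ge t 1 with ht1 | ht1
    · obtain ⟨c, hc⟩ := hsurj t ht ht1
      have h1 : F ⁻¹' Set.Iic t = Set.Iic c := by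
        ext x
        simp only [Set.mem_preimage, Set.mem_Iic, ← hc]
        exact hsm.le_iff_le
      have h2 : Set.Iic t ∩ Set.Ioo 0 1 = Set.Ioc 0 t := by
        ext x
        simp only [Set.mem_inter_iff, Set.mem_Iic, Set.mem_Ioo, Set.mem_Ioc]
        constructor
        · rintro ⟨h1x, h2x, _⟩; exact ⟨h2x, h1x⟩
        · rintro ⟨h1x, h2x⟩; exact ⟨h2x, h1x, by linarith⟩
      rw [h1, h2, hFν, hc, Real.volume_Ioc]
      simp
    · have h1 : F ⁻¹' Set.Iic t = Set.univ := by
        ext x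
        simp only [Set.mem_preimage, Set.mem_Iic, Set.mem_univ, iff_true]
        exact (hFlt1 x).le.trans ht1
      have h2 : Set.Iic t ∩ Set.Ioo 0 1 = Set.Ioo 0 1 := by
        rw [Set.inter_eq_right]
        intro x hx
        exact le_trans hx.2.le ht1
      rw [h1, h2, measure_univ, Real.volume_Ioo]
      simp
  -- generic integrability facts
  have h1α : (0:ℝ) < 1/α := by positivity
  have hints : ∀ g : Ω → ℝ, Measurable g → (∀ ω, 0 ≤ g ω ∧ g ω ≤ 1/α) →
      Integrable g μ ∧ Integrable (fun ω => g ω * X ω) μ := by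
    intro g hgm hgbd
    constructor
    · refine Integrable.mono' (integrable_const (1/α)) hgm.aestronglyMeasurable ?_
      filter_upwards with ω
      rw [Real.norm_eq_abs, abs_of_nonneg (hgbd ω).1]
      exact (hgbd ω).2
    · refine Integrable.mono' (hX.abs.const_mul (1/α)) (hgm.mul hXm).aestronglyMeasurable ?_
      filter_upwards with ω
      rw [Real.norm_eq_abs, abs_mul]
      have := abs_nonneg (X ω)
      have h1 : |g ω| ≤ 1/α := by
        rw [abs_of_nonneg (hgbd ω).1]; exact (hgbd ω).2
      nlinarith
  rcases lt_or_eq_of_le hα1 with hα1' | hα1'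
  · -- case α < 1
    obtain ⟨c, hc⟩ := hsurj α hα0 hα1'
    have hsetm : MeasurableSet {ω | X ω ≤ c} := hXm measurableSet_Iic
    -- the left-hand side integral
    have hLHS : ∫ τ in Set.Ioc 0 α, quantile μ X τ =
        ∫ ω in {ω | X ω ≤ c}, X ω ∂μ := by
      have hsub : Set.Ioc (0:ℝ) α ⊆ Set.Ioo 0 1 := fun x hx => ⟨hx.1, lt_of_le_of_lt hx.2 hα1'⟩
      have hres : (volume.restrict (Set.Ioo 0 1)).restrict (Set.Ioc (0:ℝ) α)
          = volume.restrict (Set.Ioc (0:ℝ) α) := by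
        rw [Measure.restrict_restrict measurableSet_Ioc, Set.inter_eq_left.mpr hsub]
      calc ∫ τ in Set.Ioc 0 α, quantile μ X τ
          = ∫ τ in Set.Ioc 0 α, quantile μ X τ ∂(ν.map F) := by
            rw [hmapF]
            rw [hres]
        _ = ∫ x in F ⁻¹' (Set.Ioc 0 α), quantile μ X (F x) ∂ν :=
            hembF.setIntegral_map _ _
        _ = ∫ x in Set.Iic c, quantile μ X (F x) ∂ν := by
            have hpreq : F ⁻¹' (Set.Ioc 0 α) = Set.Iic c := by
              ext x
              simp only [Set.mem_preimage, Set.mem_Ioc, Set.mem_Iic, ← hc]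
              exact ⟨fun h => hsm.le_iff_le.mp h.2, fun h => ⟨hF0lt x, hsm.le_iff_le.mpr h⟩⟩
            rw [hpreq]
        _ = ∫ x in Set.Iic c, x ∂ν := by simp only [hquant]
        _ = ∫ ω in X ⁻¹' Set.Iic c, X ω ∂μ := by
            rw [hνdef]
            exact setIntegral_map measurableSet_Iic measurable_id.aestronglyMeasurable hXae
        _ = ∫ ω in {ω | X ω ≤ c}, X ω ∂μ := rfl
    -- the optimal dual variable
    set g0 : Ω → ℝ := fun ω => ({ω' | X ω' ≤ c}).indicator (fun _ => 1/α) ω with hg0def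
    have hg0m : Measurable g0 := measurable_const.indicator hsetm
    have hg0bd : ∀ ω, 0 ≤ g0 ω ∧ g0 ω ≤ 1/α := by
      intro ω
      rw [hg0def]
      simp only [Set.indicator]
      split_ifs
      · exact ⟨h1α.le, le_refl _⟩
      · exact ⟨le_refl _, h1α.le⟩
    have hg0one : (∫ ω, g0 ω ∂μ) = 1 := by
      rw [hg0def, integral_indicator_const _ hsetm, smul_eq_mul, measureReal_def, hFx, hc]
      field_simp
    have hg0X : ∫ ω, g0 ω * X ω ∂μ = (1/α) * ∫ ω in {ω | X ω ≤ c}, X ω ∂μ := by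
      have h1 : (fun ω => g0 ω * X ω)
          = fun ω => ({ω' | X ω' ≤ c}).indicator (fun ω' => (1/α) * X ω') ω := by
        funext ω
        rw [hg0def]
        simp only [Set.indicator]
        split_ifs <;> simp
      rw [h1, integral_indicator hsetm, integral_const_mul]
    have hmem : (1/α) * ∫ ω in {ω | X ω ≤ c}, X ω ∂μ ∈
        {r : ℝ | ∃ g : Ω → ℝ, Measurable g ∧ (∀ ω, 0 ≤ g ω ∧ g ω ≤ 1/α) ∧
          (∫ ω, g ω ∂μ) = 1 ∧ r = ∫ ω, g ω * X ω ∂μ} :=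
      ⟨g0, hg0m, hg0bd, hg0one, hg0X.symm⟩
    have hlb : ∀ r ∈ {r : ℝ | ∃ g : Ω → ℝ, Measurable g ∧ (∀ ω, 0 ≤ g ω ∧ g ω ≤ 1/α) ∧
          (∫ ω, g ω ∂μ) = 1 ∧ r = ∫ ω, g ω * X ω ∂μ},
        (1/α) * ∫ ω in {ω | X ω ≤ c}, X ω ∂μ ≤ r := by
      rintro r ⟨g, hgm, hgbd, hgone, rfl⟩
      obtain ⟨hg_int, hgX_int⟩ := hints g hgm hgbd
      obtain ⟨hg0_int, hg0X_int⟩ := hints g0 hg0m hg0bd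
      have hpt : ∀ ω, 0 ≤ (g ω - g0 ω) * (X ω - c) := by
        intro ω
        by_cases h : X ω ≤ c
        · have hg0ω : g0 ω = 1/α := by
            simp only [hg0def, Set.indicator_apply, Set.mem_setOf_eq]
            rw [if_pos h]
          have := (hgbd ω).2
          nlinarith
        · have hg0ω : g0 ω = 0 := by
            simp only [hg0def, Set.indicator_apply, Set.mem_setOf_eq]
            rw [if_neg h]
          have := (hgbd ω).1
          push_neg at h
          nlinarith
      have hnn : 0 ≤ ∫ ω, (g ω - g0 ω) * (X ω - c) ∂μ := integral_nonneg hpt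
      have hexpand : ∫ ω, (g ω - g0 ω) * (X ω - c) ∂μ =
          (∫ ω, g ω * X ω ∂μ) - (∫ ω, g0 ω * X ω ∂μ)
            - (c * ∫ ω, g ω ∂μ - c * ∫ ω, g0 ω ∂μ) := by
        have h1 : (fun ω => (g ω - g0 ω) * (X ω - c))
            = fun ω => (g ω * X ω - g0 ω * X ω) - (c * g ω - c * g0 ω) :=
          funext fun ω => by ring
        have hi1 : Integrable (fun ω => g ω * X ω - g0 ω * X ω) μ := hgX_int.sub hg0X_int
        have hi2 : Integrable (fun ω => c * g ω - c * g0 ω) μ :=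
          (hg_int.const_mul c).sub (hg0_int.const_mul c)
        rw [h1, integral_sub hi1 hi2, integral_sub hgX_int hg0X_int,
          integral_sub (hg_int.const_mul c) (hg0_int.const_mul c),
          integral_const_mul, integral_const_mul]
      rw [hexpand, hgone, hg0one, hg0X] at hnn
      linarith
    have hsInf : sInf {r : ℝ | ∃ g : Ω → ℝ, Measurable g ∧ (∀ ω, 0 ≤ g ω ∧ g ω ≤ 1/α) ∧
          (∫ ω, g ω ∂μ) = 1 ∧ r = ∫ ω, g ω * X ω ∂μ}
        = (1/α) * ∫ ω in {ω | X ω ≤ c}, X ω ∂μ :=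
      le_antisymm (csInf_le ⟨_, hlb⟩ hmem) (le_csInf ⟨_, hmem⟩ hlb)
    rw [hsInf, hLHS]
  · -- case α = 1
    subst hα1'
    have hLHS : ∫ τ in Set.Ioc (0:ℝ) 1, quantile μ X τ = ∫ ω, X ω ∂μ := by
      calc ∫ τ in Set.Ioc (0:ℝ) 1, quantile μ X τ
          = ∫ τ in Set.Ioo (0:ℝ) 1, quantile μ X τ :=
            (setIntegral_congr_set Ioo_ae_eq_Ioc).symm
        _ = ∫ τ, quantile μ X τ ∂(ν.map F) := by rw [hmapF]
        _ = ∫ x, quantile μ X (F x) ∂ν := hembF.integral_map _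
        _ = ∫ x, x ∂ν := by simp only [hquant]
        _ = ∫ ω, X ω ∂μ := by
            rw [hνdef]
            exact integral_map hXae measurable_id.aestronglyMeasurable
    have hmem : (∫ ω, X ω ∂μ) ∈
        {r : ℝ | ∃ g : Ω → ℝ, Measurable g ∧ (∀ ω, 0 ≤ g ω ∧ g ω ≤ 1/1) ∧
          (∫ ω, g ω ∂μ) = 1 ∧ r = ∫ ω, g ω * X ω ∂μ} := by
      refine ⟨fun _ => 1, measurable_const, fun ω => by norm_num, by simp, by simp⟩
    have hlb : ∀ r ∈ {r : ℝ | ∃ g : Ω → ℝ, Measurable g ∧ (∀ ω, 0 ≤ g ω ∧ g ω ≤ 1/1) ∧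
          (∫ ω, g ω ∂μ) = 1 ∧ r = ∫ ω, g ω * X ω ∂μ}, (∫ ω, X ω ∂μ) ≤ r := by
      rintro r ⟨g, hgm, hgbd, hgone, rfl⟩
      obtain ⟨hg_int, _⟩ := hints g hgm hgbd
      have h1g : ∫ ω, (1 - g ω) ∂μ = 0 := by
        rw [integral_sub (integrable_const 1) hg_int, hgone]
        simp
      have hae : (fun ω => 1 - g ω) =ᵐ[μ] 0 := by
        refine (integral_eq_zero_iff_of_nonneg (fun ω => ?_) ((integrable_const 1).sub hg_int)).mp h1g
        show (0:ℝ) ≤ 1 - g ω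
        have h2 := (hgbd ω).2
        norm_num at h2
        linarith
      have : (fun ω => g ω * X ω) =ᵐ[μ] X := by
        filter_upwards [hae] with ω hω
        simp only [Pi.zero_apply] at hω
        have : g ω = 1 := by linarith
        simp [this]
      rw [integral_congr_ae this]
    have hsInf : sInf {r : ℝ | ∃ g : Ω → ℝ, Measurable g ∧ (∀ ω, 0 ≤ g ω ∧ g ω ≤ 1/1) ∧
          (∫ ω, g ω ∂μ) = 1 ∧ r = ∫ ω, g ω * X ω ∂μ} = ∫ ω, X ω ∂μ :=
      le_antisymm (csInf_le ⟨_, hlb⟩ hmem) (le_csInf ⟨_, hmem⟩ hlb)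
    rw [hsInf, hLHS]
    norm_num
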